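/- arXiv:2402.15776 — 2 statements merged into one kernel-verified Lean document; each statement's English description precedes it below -/
import Mathlib

section
/- Strong duality for finite-horizon constrained MDPs: under Slater's condition, max over policies π of (inf over λ ∈ ℝ^I_{≥0} of L(π,λ)) equals min over λ ∈ ℝ^I_{≥0} of (max over policies π of L(π,λ)), and both the primal optimum (over π) and the dual optimum (over λ) are attained. -/
open Finset

noncomputable section

/-- A (nonstationary) policy: at each step and state, a probability distribution over actions. -/
def IsPolicy {S A : Type*} [Fintype A] (π : ℕ → S → A → ℝ) : Prop :=
  ∀ h s, (∀ a, 0 ≤ π h s a) ∧ ∑ a, π h s a = 1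

/-- A (nonstationary) transition kernel. -/
def IsKernel {S A : Type*} [Fintype S] (p : ℕ → S → A → S → ℝ) : Prop :=
  ∀ h s a, (∀ s', 0 ≤ p h s a s') ∧ ∑ s', p h s a s' = 1

/-- State-action value with `n` steps remaining (including the current step `h`). -/
def Qaux {S A : Type*} [Fintype S] [Fintype A] (p : ℕ → S → A → S → ℝ)
    (r' : ℕ → S → A → ℝ) (π : ℕ → S → A → ℝ) : ℕ → ℕ → S → A → ℝ
  | 0, _, _, _ => 0
  | n + 1, h, s, a =>
      r' h s a + ∑ s', p h s a s' * ∑ a', π (h + 1) s' a' * Qaux p r' π n (h + 1) s' a'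

/-- `Q^π_{r',h}(s,a)` in the horizon-`H` MDP with transitions `p`. -/
def Qval {S A : Type*} [Fintype S] [Fintype A] (H : ℕ) (p : ℕ → S → A → S → ℝ)
    (r' : ℕ → S → A → ℝ) (π : ℕ → S → A → ℝ) (h : ℕ) (s : S) (a : A) : ℝ :=
  Qaux p r' π (H - h) h s a

/-- Value `V^π_{r'}` from the initial state `s₁`. -/
def Vval {S A : Type*} [Fintype S] [Fintype A] (H : ℕ) (p : ℕ → S → A → S → ℝ)
    (s₁ : S) (r' : ℕ → S → A → ℝ) (π : ℕ → S → A → ℝ) : ℝ :=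
  ∑ a, π 0 s₁ a * Qval H p r' π 0 s₁ a

/-- The Lagrangian `L(π,λ) = V^π_r + ∑ i, λ_i (V^π_{u_i} - c_i)`. -/
def Lag {S A : Type*} [Fintype S] [Fintype A] {I : ℕ} (H : ℕ) (p : ℕ → S → A → S → ℝ)
    (s₁ : S) (r : ℕ → S → A → ℝ) (u : Fin I → ℕ → S → A → ℝ) (c : Fin I → ℝ)
    (π : ℕ → S → A → ℝ) (lam : Fin I → ℝ) : ℝ :=
  Vval H p s₁ r π + ∑ i, lam i * (Vval H p s₁ (u i) π - c i)

namespace CMDPAux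

open Classical

variable {S A : Type*} [Fintype S] [Fintype A]

/-- one-step pushforward of a state distribution -/
def push (p : ℕ → S → A → S → ℝ) (π : ℕ → S → A → ℝ) (h : ℕ) (ρ : S → ℝ) : S → ℝ :=
  fun s' => ∑ s, ∑ a, ρ s * π h s a * p h s a s'

def pushIter (p : ℕ → S → A → S → ℝ) (π : ℕ → S → A → ℝ) : ℕ → ℕ → (S → ℝ) → S → ℝ
  | _, 0, ρ => ρ
  | h, k+1, ρ => pushIter p π (h+1) k (push p π h ρ)

/-- state occupancy at step h -/
def occ (p : ℕ → S → A → S → ℝ) (π : ℕ → S → A → ℝ) (s₁ : S) (h : ℕ) : S → ℝ :=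
  pushIter p π 0 h (fun s => if s = s₁ then 1 else 0)

lemma pushIter_succ (p : ℕ → S → A → S → ℝ) (π : ℕ → S → A → ℝ) :
    ∀ (k h : ℕ) (ρ : S → ℝ), pushIter p π h (k+1) ρ = push p π (h+k) (pushIter p π h k ρ) := by
  intro k
  induction k with
  | zero => intro h ρ; rfl
  | succ k ih =>
      intro h ρ
      show pushIter p π (h+1) (k+1) (push p π h ρ) = _
      rw [ih (h+1) (push p π h ρ)]
      have e : h + 1 + k = h + (k+1) := by omega
      rw [e]
      rfl

lemma occ_succ (p : ℕ → S → A → S → ℝ) (π : ℕ → S → A → ℝ) (s₁ : S) (h : ℕ) :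
    occ p π s₁ (h+1) = push p π h (occ p π s₁ h) := by
  unfold occ
  rw [pushIter_succ]
  simp

lemma occ_zero (p : ℕ → S → A → S → ℝ) (π : ℕ → S → A → ℝ) (s₁ : S) :
    occ p π s₁ 0 = fun s => if s = s₁ then 1 else 0 := rfl

lemma occ_nonneg {p : ℕ → S → A → S → ℝ} {π : ℕ → S → A → ℝ}
    (hp : IsKernel p) (hπ : IsPolicy π) (s₁ : S) :
    ∀ h s, 0 ≤ occ p π s₁ h s := by
  intro h
  induction h with
  | zero => intro s; rw [occ_zero]; dsimp only; positivity
  | succ h ih =>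
      intro s
      rw [occ_succ]
      unfold push
      apply Finset.sum_nonneg; intro x _
      apply Finset.sum_nonneg; intro a _
      exact mul_nonneg (mul_nonneg (ih x) ((hπ h x).1 a)) ((hp h x a).1 s)

lemma push_swap (p : ℕ → S → A → S → ℝ) (π : ℕ → S → A → ℝ) (h : ℕ) (ρ : S → ℝ)
    (W : S → ℝ) :
    ∑ s', push p π h ρ s' * W s'
      = ∑ s, ρ s * ∑ a, π h s a * ∑ s', p h s a s' * W s' := by
  unfold push
  simp only [Finset.sum_mul, Finset.mul_sum]
  rw [Finset.sum_comm]
  apply Finset.sum_congr rfl; intro s _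
  rw [Finset.sum_comm]
  apply Finset.sum_congr rfl; intro a _
  apply Finset.sum_congr rfl; intro s' _
  ring

/-- key value formula step -/
lemma weight_formula (p : ℕ → S → A → S → ℝ) (π : ℕ → S → A → ℝ) (r' : ℕ → S → A → ℝ) :
    ∀ (n h : ℕ) (ρ : S → ℝ),
      ∑ s, ρ s * ∑ a, π h s a * Qaux p r' π n h s a
        = ∑ k ∈ Finset.range n, ∑ s, pushIter p π h k ρ s * ∑ a, π (h+k) s a * r' (h+k) s a := by
  intro n
  induction n with
  | zero => intro h ρ; simp [Qaux]
  | succ n ih =>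
      intro h ρ
      have step1 : ∀ s, ∑ a, π h s a * Qaux p r' π (n+1) h s a
          = (∑ a, π h s a * r' h s a)
            + ∑ a, π h s a * ∑ s', p h s a s'
                * ∑ a', π (h+1) s' a' * Qaux p r' π n (h+1) s' a' := by
        intro s
        rw [← Finset.sum_add_distrib]
        apply Finset.sum_congr rfl; intro a _
        show π h s a * (r' h s a + _) = _
        ring
      have expand : ∑ s, ρ s * ∑ a, π h s a * Qaux p r' π (n+1) h s a
          = (∑ s, ρ s * ∑ a, π h s a * r' h s a)
            + ∑ s', (push p π h ρ) s'
                * ∑ a', π (h+1) s' a' * Qaux p r' π n (h+1) s' a' := by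
        rw [push_swap]
        rw [← Finset.sum_add_distrib]
        apply Finset.sum_congr rfl; intro s _
        rw [step1 s]
        ring
      rw [expand, ih (h+1) (push p π h ρ), Finset.sum_range_succ']
      rw [add_comm]
      congr 1
      · apply Finset.sum_congr rfl; intro k _
        show ∑ s, pushIter p π (h+1) k (push p π h ρ) s * _ = _
        have e1 : pushIter p π h (k+1) ρ = pushIter p π (h+1) k (push p π h ρ) := rfl
        rw [e1]
        apply Finset.sum_congr rfl; intro s _
        have e2 : h + 1 + k = h + (k + 1) := by omega
        rw [e2]

/-- the value is a linear functional of the occupancy measure -/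
lemma value_formula (H : ℕ) (p : ℕ → S → A → S → ℝ) (s₁ : S) (r' : ℕ → S → A → ℝ)
    (π : ℕ → S → A → ℝ) :
    Vval H p s₁ r' π
      = ∑ h ∈ Finset.range H, ∑ s, ∑ a, occ p π s₁ h s * π h s a * r' h s a := by
  have h0 : Vval H p s₁ r' π
      = ∑ s, (fun s => if s = s₁ then (1:ℝ) else 0) s
          * ∑ a, π 0 s a * Qaux p r' π H 0 s a := by
    simp only [ite_mul, one_mul, zero_mul, Finset.sum_ite_eq', Finset.mem_univ, if_true]
    simp [Vval, Qval]
  rw [h0, weight_formula]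
  apply Finset.sum_congr rfl; intro k _
  apply Finset.sum_congr rfl; intro s _
  rw [Finset.mul_sum]
  apply Finset.sum_congr rfl; intro a _
  show occ p π s₁ k s * (π (0+k) s a * r' (0+k) s a) = _
  rw [Nat.zero_add]; ring


section Mix

variable (p : ℕ → S → A → S → ℝ) (π₁ π₂ : ℕ → S → A → ℝ) (s₁ : S) (t : ℝ)

def mixOcc (h : ℕ) (s : S) : ℝ :=
  t * occ p π₁ s₁ h s + (1 - t) * occ p π₂ s₁ h s

def mixNu (h : ℕ) (s : S) (a : A) : ℝ :=
  t * occ p π₁ s₁ h s * π₁ h s a + (1 - t) * occ p π₂ s₁ h s * π₂ h s a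

def mixPol (h : ℕ) (s : S) (a : A) : ℝ :=
  if mixOcc p π₁ π₂ s₁ t h s = 0 then (Fintype.card A : ℝ)⁻¹
  else mixNu p π₁ π₂ s₁ t h s a / mixOcc p π₁ π₂ s₁ t h s

variable {p π₁ π₂ t}

lemma sum_mixNu (h1 : IsPolicy π₁) (h2 : IsPolicy π₂) (h : ℕ) (s : S) :
    ∑ a, mixNu p π₁ π₂ s₁ t h s a = mixOcc p π₁ π₂ s₁ t h s := by
  unfold mixNu mixOcc
  rw [Finset.sum_add_distrib, ← Finset.mul_sum, ← Finset.mul_sum,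
    (h1 h s).2, (h2 h s).2, mul_one, mul_one]

variable (hp : IsKernel p) (h1 : IsPolicy π₁) (h2 : IsPolicy π₂)
  (ht0 : 0 ≤ t) (ht1 : t ≤ 1)

include hp h1 h2 ht0 ht1

lemma mixNu_nonneg (h : ℕ) (s : S) (a : A) : 0 ≤ mixNu p π₁ π₂ s₁ t h s a := by
  unfold mixNu
  have o1 := occ_nonneg hp h1 s₁ h s
  have o2 := occ_nonneg hp h2 s₁ h s
  have p1 := (h1 h s).1 a
  have p2 := (h2 h s).1 a
  have ht1' : 0 ≤ 1 - t := by linarith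
  positivity

lemma mixOcc_nonneg (h : ℕ) (s : S) : 0 ≤ mixOcc p π₁ π₂ s₁ t h s := by
  unfold mixOcc
  have o1 := occ_nonneg hp h1 s₁ h s
  have o2 := occ_nonneg hp h2 s₁ h s
  have ht1' : 0 ≤ 1 - t := by linarith
  positivity

lemma mixNu_eq_zero (h : ℕ) (s : S) (hm : mixOcc p π₁ π₂ s₁ t h s = 0) (a : A) :
    mixNu p π₁ π₂ s₁ t h s a = 0 := by
  have hsum : ∑ a, mixNu p π₁ π₂ s₁ t h s a = 0 := by
    rw [sum_mixNu s₁ h1 h2]; exact hm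
  have := (Finset.sum_eq_zero_iff_of_nonneg
    (fun a _ => mixNu_nonneg s₁ hp h1 h2 ht0 ht1 h s a)).1 hsum
  exact this a (Finset.mem_univ a)

lemma mixPol_isPolicy [Nonempty A] : IsPolicy (mixPol p π₁ π₂ s₁ t) := by
  intro h s
  unfold mixPol
  by_cases hm : mixOcc p π₁ π₂ s₁ t h s = 0
  · simp only [hm, if_true]
    constructor
    · intro a; positivity
    · rw [Finset.sum_const, Finset.card_univ, nsmul_eq_mul]
      rw [mul_inv_cancel₀]
      exact_mod_cast Fintype.card_ne_zero
  · simp only [hm, if_false]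
    have hpos : 0 < mixOcc p π₁ π₂ s₁ t h s :=
      lt_of_le_of_ne (mixOcc_nonneg s₁ hp h1 h2 ht0 ht1 h s) (Ne.symm hm)
    constructor
    · intro a
      exact div_nonneg (mixNu_nonneg s₁ hp h1 h2 ht0 ht1 h s a) hpos.le
    · rw [← Finset.sum_div, sum_mixNu s₁ h1 h2, div_self hm]

lemma occ_mul_mixPol (h : ℕ) (s : S) (a : A)
    (hocc : occ p (mixPol p π₁ π₂ s₁ t) s₁ h s = mixOcc p π₁ π₂ s₁ t h s) :
    occ p (mixPol p π₁ π₂ s₁ t) s₁ h s * mixPol p π₁ π₂ s₁ t h s a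
      = mixNu p π₁ π₂ s₁ t h s a := by
  rw [hocc]
  unfold mixPol
  by_cases hm : mixOcc p π₁ π₂ s₁ t h s = 0
  · simp only [hm, if_true, zero_mul]
    exact (mixNu_eq_zero s₁ hp h1 h2 ht0 ht1 h s hm a).symm
  · simp only [hm, if_false]
    field_simp

lemma occ_mixPol : ∀ (h : ℕ) (s : S),
    occ p (mixPol p π₁ π₂ s₁ t) s₁ h s = mixOcc p π₁ π₂ s₁ t h s := by
  intro h
  induction h with
  | zero =>
      intro s
      rw [occ_zero]
      unfold mixOcc
      rw [occ_zero, occ_zero]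
      dsimp only
      split <;> ring
  | succ h ih =>
      intro s'
      rw [occ_succ]
      unfold push
      have e1 : ∀ s a, occ p (mixPol p π₁ π₂ s₁ t) s₁ h s * mixPol p π₁ π₂ s₁ t h s a
          * p h s a s' = mixNu p π₁ π₂ s₁ t h s a * p h s a s' := by
        intro s a
        rw [occ_mul_mixPol s₁ hp h1 h2 ht0 ht1 h s a (ih s)]
      calc ∑ s, ∑ a, occ p (mixPol p π₁ π₂ s₁ t) s₁ h s * mixPol p π₁ π₂ s₁ t h s a
              * p h s a s'
          = ∑ s, ∑ a, mixNu p π₁ π₂ s₁ t h s a * p h s a s' := by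
            exact Finset.sum_congr rfl fun s _ => Finset.sum_congr rfl fun a _ => e1 s a
        _ = t * (∑ s, ∑ a, occ p π₁ s₁ h s * π₁ h s a * p h s a s')
            + (1 - t) * (∑ s, ∑ a, occ p π₂ s₁ h s * π₂ h s a * p h s a s') := by
            rw [Finset.mul_sum, Finset.mul_sum, ← Finset.sum_add_distrib]
            apply Finset.sum_congr rfl; intro s _
            rw [Finset.mul_sum, Finset.mul_sum, ← Finset.sum_add_distrib]
            apply Finset.sum_congr rfl; intro a _
            unfold mixNu; ring
        _ = mixOcc p π₁ π₂ s₁ t (h+1) s' := by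
            unfold mixOcc
            rw [occ_succ, occ_succ]
            rfl

lemma Vval_mixPol (H : ℕ) (r' : ℕ → S → A → ℝ) :
    Vval H p s₁ r' (mixPol p π₁ π₂ s₁ t)
      = t * Vval H p s₁ r' π₁ + (1 - t) * Vval H p s₁ r' π₂ := by
  rw [value_formula, value_formula, value_formula]
  rw [Finset.mul_sum, Finset.mul_sum, ← Finset.sum_add_distrib]
  apply Finset.sum_congr rfl; intro h _
  rw [Finset.mul_sum, Finset.mul_sum, ← Finset.sum_add_distrib]
  apply Finset.sum_congr rfl; intro s _
  rw [Finset.mul_sum, Finset.mul_sum, ← Finset.sum_add_distrib]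
  apply Finset.sum_congr rfl; intro a _
  have := occ_mul_mixPol s₁ hp h1 h2 ht0 ht1 h s a (occ_mixPol s₁ hp h1 h2 ht0 ht1 h s)
  rw [this]
  unfold mixNu; ring

end Mix

end CMDPAux

namespace CMDPAux

variable {S A : Type*} [Fintype S] [Fintype A]

lemma continuous_Qaux (p : ℕ → S → A → S → ℝ) (r' : ℕ → S → A → ℝ) :
    ∀ (n h : ℕ) (s : S) (a : A),
      Continuous (fun π : ℕ → S → A → ℝ => Qaux p r' π n h s a) := by
  intro n
  induction n with
  | zero => intro h s a; simpa [Qaux] using continuous_const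
  | succ n ih =>
      intro h s a
      show Continuous fun π : ℕ → S → A → ℝ =>
        r' h s a + ∑ s', p h s a s' * ∑ a', π (h + 1) s' a' * Qaux p r' π n (h + 1) s' a'
      apply continuous_const.add
      apply continuous_finset_sum
      intro s' _
      apply continuous_const.mul
      apply continuous_finset_sum
      intro a' _
      exact ((continuous_apply a').comp
        ((continuous_apply s').comp (continuous_apply (A := fun _ : ℕ => S → A → ℝ) (h + 1)))).mul (ih (h + 1) s' a')

lemma continuous_Vval (H : ℕ) (p : ℕ → S → A → S → ℝ) (s₁ : S) (r' : ℕ → S → A → ℝ) :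
    Continuous (fun π : ℕ → S → A → ℝ => Vval H p s₁ r' π) := by
  unfold Vval Qval
  apply continuous_finset_sum
  intro a _
  exact ((continuous_apply a).comp
    ((continuous_apply s₁).comp (continuous_apply (A := fun _ : ℕ => S → A → ℝ) 0))).mul (continuous_Qaux p r' (H - 0) 0 s₁ a)

lemma isCompact_policies [Nonempty A] :
    IsCompact {π : ℕ → S → A → ℝ | IsPolicy π} := by
  have heq : {π : ℕ → S → A → ℝ | IsPolicy π}
      = {π : ℕ → S → A → ℝ | ∀ h : ℕ, π h ∈ {f : S → A → ℝ | ∀ s, f s ∈ stdSimplex ℝ A}} := by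
    ext π
    simp only [Set.mem_setOf_eq, IsPolicy, stdSimplex]
  rw [heq]
  exact isCompact_pi_infinite fun h =>
    isCompact_pi_infinite fun s => isCompact_stdSimplex ℝ A

end CMDPAux

/-- helper: if `a + b*T < u` for all `T ≥ 1` then `b ≤ 0`. -/
lemma unbounded_nonpos {a b u : ℝ} (h : ∀ T : ℝ, 1 ≤ T → a + b * T < u) : b ≤ 0 := by
  by_contra hb
  push_neg at hb
  set T := max 1 ((u - a) / b) with hT
  have h1 := h T (le_max_left _ _)
  have h2 : (u - a) / b ≤ T := le_max_right _ _
  have h3 : u - a ≤ T * b := (div_le_iff₀ hb).1 h2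
  nlinarith

/-- helper: if `v + ε*C < u` for all `ε > 0`, where `C ≤ 0`, then `v ≤ u`. -/
lemma limit_le {v C u : ℝ} (hC : C ≤ 0) (h : ∀ ε : ℝ, 0 < ε → v + ε * C < u) : v ≤ u := by
  rcases eq_or_lt_of_le hC with hC0 | hC0
  · have := h 1 one_pos
    rw [hC0] at this
    linarith
  · by_contra hu
    push_neg at hu
    have hε : 0 < (u - v) / C := div_pos_of_neg_of_neg (by linarith) hC0
    have := h _ hε
    rw [div_mul_cancel₀ _ (ne_of_lt hC0)] at this
    linarith

/-- Strong duality for finite-horizon CMDPs, Lemma C.1.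
Under Slater's condition,
`max_π inf_{λ ≥ 0} L(π,λ) = min_{λ ≥ 0} max_π L(π,λ)`, and both the primal optimum
(over policies) and the dual optimum (over multipliers) are attained.  The inner
infima/suprema are taken in the extended reals. -/
theorem cmdp_strong_duality
    {S A : Type*} [Fintype S] [Fintype A] [Nonempty S] [Nonempty A]
    {I : ℕ} (H : ℕ) (p : ℕ → S → A → S → ℝ) (hp : IsKernel p) (s₁ : S)
    (r : ℕ → S → A → ℝ) (hr : ∀ h s a, r h s a ∈ Set.Icc (0 : ℝ) 1)
    (u : Fin I → ℕ → S → A → ℝ) (hu : ∀ i h s a, u i h s a ∈ Set.Icc (0 : ℝ) 1)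
    (c : Fin I → ℝ) (hc : ∀ i, c i ∈ Set.Icc (0 : ℝ) (H : ℝ))
    -- Slater's condition
    (πbar : ℕ → S → A → ℝ) (hπbar : IsPolicy πbar)
    (ξ : Fin I → ℝ) (hξ : ∀ i, 0 < ξ i)
    (hslater : ∀ i, c i + ξ i ≤ Vval H p s₁ (u i) πbar) :
    ∃ (πs : ℕ → S → A → ℝ) (lams : Fin I → ℝ), IsPolicy πs ∧ (∀ i, 0 ≤ lams i) ∧
      -- the primal optimum is attained at `πs`
      (⨅ lam : {l : Fin I → ℝ // ∀ i, 0 ≤ l i},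
          ((Lag H p s₁ r u c πs lam.1 : ℝ) : EReal))
        = (⨆ π : {π : ℕ → S → A → ℝ // IsPolicy π},
            ⨅ lam : {l : Fin I → ℝ // ∀ i, 0 ≤ l i},
              ((Lag H p s₁ r u c π.1 lam.1 : ℝ) : EReal)) ∧
      -- the dual optimum is attained at `lams`
      (⨆ π : {π : ℕ → S → A → ℝ // IsPolicy π},
          ((Lag H p s₁ r u c π.1 lams : ℝ) : EReal))
        = (⨅ lam : {l : Fin I → ℝ // ∀ i, 0 ≤ l i},
            ⨆ π : {π : ℕ → S → A → ℝ // IsPolicy π},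
              ((Lag H p s₁ r u c π.1 lam.1 : ℝ) : EReal)) ∧
      -- strong duality
      (⨆ π : {π : ℕ → S → A → ℝ // IsPolicy π},
          ⨅ lam : {l : Fin I → ℝ // ∀ i, 0 ≤ l i},
            ((Lag H p s₁ r u c π.1 lam.1 : ℝ) : EReal))
        = (⨅ lam : {l : Fin I → ℝ // ∀ i, 0 ≤ l i},
            ⨆ π : {π : ℕ → S → A → ℝ // IsPolicy π},
              ((Lag H p s₁ r u c π.1 lam.1 : ℝ) : EReal)) := by
  classical
  -- Step A: existence of an optimal feasible policy
  set Kf : Set (ℕ → S → A → ℝ) :=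
    {π | IsPolicy π ∧ ∀ i, c i ≤ Vval H p s₁ (u i) π} with hKf
  have hKfcomp : IsCompact Kf := by
    have heq : Kf = {π : ℕ → S → A → ℝ | IsPolicy π}
        ∩ ⋂ i, {π : ℕ → S → A → ℝ | c i ≤ Vval H p s₁ (u i) π} := by
      ext π; simp [hKf, Set.mem_iInter]
    rw [heq]
    exact CMDPAux.isCompact_policies.inter_right
      (isClosed_iInter fun i =>
        isClosed_le continuous_const (CMDPAux.continuous_Vval H p s₁ (u i)))
  have hπbarKf : πbar ∈ Kf := ⟨hπbar, fun i => by have := hslater i; have := hξ i; linarith⟩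
  obtain ⟨πs, hπsKf, hπsmax'⟩ := hKfcomp.exists_isMaxOn ⟨πbar, hπbarKf⟩
    ((CMDPAux.continuous_Vval H p s₁ r).continuousOn)
  have hπsmax : ∀ π ∈ Kf, Vval H p s₁ r π ≤ Vval H p s₁ r πs :=
    fun π hπ => hπsmax' hπ
  set pstar := Vval H p s₁ r πs with hpstar
  -- Step B: separation
  set Aset : Set (ℝ × (Fin I → ℝ)) :=
    {x | ∃ π, IsPolicy π ∧ x.1 ≤ Vval H p s₁ r π ∧
      ∀ i, x.2 i ≤ Vval H p s₁ (u i) π - c i} with hAset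
  set B : Set (ℝ × (Fin I → ℝ)) := {x | pstar < x.1 ∧ ∀ i, 0 < x.2 i} with hB
  have hBopen : IsOpen B := by
    have heq : B = {x : ℝ × (Fin I → ℝ) | pstar < x.1}
        ∩ ⋂ i, {x : ℝ × (Fin I → ℝ) | 0 < x.2 i} := by
      ext x; simp [hB, Set.mem_iInter]
    rw [heq]
    exact (isOpen_lt continuous_const continuous_fst).inter
      (isOpen_iInter_of_finite fun i =>
        isOpen_lt continuous_const ((continuous_apply i).comp continuous_snd))
  have hBconv : Convex ℝ B := by
    rintro x ⟨hx1, hx2⟩ y ⟨hy1, hy2⟩ a b ha hb hab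
    have hcomb : ∀ q xv yv : ℝ, q < xv → q < yv → q < a * xv + b * yv := by
      intro q xv yv hxv hyv
      rcases eq_or_lt_of_le ha with ha' | ha'
      · have hb1 : b = 1 := by linarith
        rw [← ha', hb1]; linarith
      · have hq : a * q + b * q = q := by rw [← add_mul, hab, one_mul]
        nlinarith [mul_le_mul_of_nonneg_left hyv.le hb, mul_lt_mul_of_pos_left hxv ha']
    constructor
    · have : (a • x + b • y).1 = a * x.1 + b * y.1 := by simp
      rw [this]; exact hcomb _ _ _ hx1 hy1
    · intro i
      have : (a • x + b • y).2 i = a * x.2 i + b * y.2 i := by simp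
      rw [this]; exact hcomb _ _ _ (hx2 i) (hy2 i)
  have hAconv : Convex ℝ Aset := by
    rintro x ⟨πa, hπa, hxa, hxi⟩ y ⟨πb, hπb, hyb, hyi⟩ a b ha hb hab
    have hb' : (1 : ℝ) - a = b := by linarith
    have ha1 : a ≤ 1 := by linarith
    refine ⟨CMDPAux.mixPol p πa πb s₁ a,
      CMDPAux.mixPol_isPolicy s₁ hp hπa hπb ha ha1, ?_, ?_⟩
    · have hv := CMDPAux.Vval_mixPol s₁ hp hπa hπb ha ha1 H r
      rw [hb'] at hv
      have : (a • x + b • y).1 = a * x.1 + b * y.1 := by simp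
      rw [this, hv]
      exact add_le_add (mul_le_mul_of_nonneg_left hxa ha) (mul_le_mul_of_nonneg_left hyb hb)
    · intro i
      have hv := CMDPAux.Vval_mixPol s₁ hp hπa hπb ha ha1 H (u i)
      rw [hb'] at hv
      have h2 : (a • x + b • y).2 i = a * x.2 i + b * y.2 i := by simp
      rw [h2, hv]
      have e1 : a * (Vval H p s₁ (u i) πa - c i) + b * (Vval H p s₁ (u i) πb - c i)
          = a * Vval H p s₁ (u i) πa + b * Vval H p s₁ (u i) πb - c i := by
        have : a * c i + b * c i = c i := by rw [← add_mul, hab, one_mul]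
        ring_nf
        linarith [this]
      calc a * x.2 i + b * y.2 i
          ≤ a * (Vval H p s₁ (u i) πa - c i) + b * (Vval H p s₁ (u i) πb - c i) :=
            add_le_add (mul_le_mul_of_nonneg_left (hxi i) ha)
              (mul_le_mul_of_nonneg_left (hyi i) hb)
        _ = _ := by rw [e1]
  have hdisj : Disjoint B Aset := by
    rw [Set.disjoint_left]
    rintro x ⟨hx1, hx2⟩ ⟨π, hπ, hxr, hxu⟩
    have hfeas : π ∈ Kf := ⟨hπ, fun i => by have := hxu i; have := hx2 i; linarith⟩
    have := hπsmax π hfeas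
    linarith
  obtain ⟨f, w, hfB, hfA⟩ := geometric_hahn_banach_open hBconv hBopen hAconv hdisj
  set α := f (1, 0) with hα
  set β : Fin I → ℝ := fun i => f (0, Pi.single i 1) with hβ
  have hf_eval : ∀ x : ℝ × (Fin I → ℝ), f x = α * x.1 + ∑ i, β i * x.2 i := by
    intro x
    have hdecomp : x = x.1 • ((1, 0) : ℝ × (Fin I → ℝ))
        + ∑ i, x.2 i • ((0, Pi.single i 1) : ℝ × (Fin I → ℝ)) := by
      apply Prod.ext
      · simp [Prod.fst_sum]
      · funext j
        simp [Prod.snd_sum, Finset.sum_apply, Pi.single_apply]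
    calc f x = f (x.1 • ((1, 0) : ℝ × (Fin I → ℝ))
          + ∑ i, x.2 i • ((0, Pi.single i 1) : ℝ × (Fin I → ℝ))) := by rw [← hdecomp]
      _ = x.1 • f (1, 0) + ∑ i, x.2 i • f (0, Pi.single i 1) := by
          rw [map_add, map_smul, map_sum]
          congr 1
          exact Finset.sum_congr rfl fun i _ => map_smul f _ _
      _ = α * x.1 + ∑ i, β i * x.2 i := by
          rw [smul_eq_mul, mul_comm]
          congr 1
          exact Finset.sum_congr rfl fun i _ => by rw [smul_eq_mul, mul_comm]
  have hBlt : ∀ (y : ℝ) (z : Fin I → ℝ), pstar < y → (∀ i, 0 < z i) →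
      α * y + ∑ i, β i * z i < w := by
    intro y z hy hz
    have := hfB (y, z) ⟨hy, hz⟩
    rwa [hf_eval] at this
  have hαle : α ≤ 0 := by
    apply unbounded_nonpos (a := α * pstar + ∑ i, β i) (u := w)
    intro T hT
    have h' := hBlt (pstar + T) (fun _ => 1) (by linarith) (fun _ => one_pos)
    simp only [mul_one] at h'
    have e : α * (pstar + T) = α * pstar + α * T := mul_add α pstar T
    linarith
  have hβle : ∀ j, β j ≤ 0 := by
    intro j
    apply unbounded_nonpos (a := α * (pstar + 1) + (∑ i, β i) - β j) (u := w)
    intro T hT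
    have h' := hBlt (pstar + 1) (fun i => if i = j then T else 1) (by linarith)
      (fun i => by split <;> [linarith; exact one_pos])
    have e : ∑ i, β i * (if i = j then T else 1)
        = (∑ i, β i) + β j * (T - 1) := by
      have e1 : ∀ i : Fin I, i ∈ Finset.univ → β i * (if i = j then T else 1)
          = β i + (if i = j then β j * (T - 1) else 0) := by
        intro i _
        split_ifs with hij
        · subst hij; ring
        · ring
      rw [Finset.sum_congr rfl e1, Finset.sum_add_distrib, Finset.sum_ite_eq' Finset.univ j]
      simp
    rw [e] at h'
    linarith
  have hwge : α * pstar ≤ w := by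
    apply limit_le (C := α + ∑ i, β i)
      (add_nonpos hαle (Finset.sum_nonpos fun i _ => hβle i))
    intro ε hε
    have h' := hBlt (pstar + ε) (fun _ => ε) (by linarith) (fun _ => hε)
    have e : α * (pstar + ε) + ∑ i, β i * ε = α * pstar + ε * (α + ∑ i, β i) := by
      rw [← Finset.sum_mul]; ring
    linarith
  have hAineq : ∀ π, IsPolicy π →
      w ≤ α * Vval H p s₁ r π + ∑ i, β i * (Vval H p s₁ (u i) π - c i) := by
    intro π hπ
    have := hfA (Vval H p s₁ r π, fun i => Vval H p s₁ (u i) π - c i)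
      ⟨π, hπ, le_refl _, fun i => le_refl _⟩
    rwa [hf_eval] at this
  have hαlt : α < 0 := by
    rcases lt_or_eq_of_le hαle with h | h
    · exact h
    exfalso
    have hb := hAineq πbar hπbar
    have h1 : ∀ i, β i * (Vval H p s₁ (u i) πbar - c i) ≤ β i * ξ i := by
      intro i
      exact mul_le_mul_of_nonpos_left (by linarith [hslater i]) (hβle i)
    have h2 : ∀ i, β i * ξ i ≤ 0 := fun i => mul_nonpos_iff.2 (Or.inr ⟨hβle i, (hξ i).le⟩)
    have h3 : 0 ≤ w := by rw [h] at hwge; linarith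
    have h4 : w ≤ ∑ i, β i * ξ i := by
      calc w ≤ α * Vval H p s₁ r πbar
            + ∑ i, β i * (Vval H p s₁ (u i) πbar - c i) := hb
        _ = ∑ i, β i * (Vval H p s₁ (u i) πbar - c i) := by rw [h]; ring
        _ ≤ ∑ i, β i * ξ i := Finset.sum_le_sum fun i _ => h1 i
    have h5 : ∑ i, β i * ξ i = 0 :=
      le_antisymm (Finset.sum_nonpos fun i _ => h2 i) (by linarith)
    have h6 : ∀ i, β i = 0 := by
      intro i
      have hz := (Finset.sum_eq_zero_iff_of_nonpos (fun i _ => h2 i)).1 h5 i (Finset.mem_univ i)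
      rcases mul_eq_zero.1 hz with h' | h'
      · exact h'
      · exact absurd h' (ne_of_gt (hξ i))
    have h7 := hBlt (pstar + 1) (fun _ => 1) (by linarith) (fun _ => one_pos)
    rw [h] at h7
    simp only [h6, zero_mul, mul_one, Finset.sum_const_zero, add_zero] at h7
    linarith
  set lams : Fin I → ℝ := fun i => β i / α with hlamsdef
  have hlams : ∀ i, 0 ≤ lams i := fun i => div_nonneg_of_nonpos (hβle i) hαlt.le
  have hkey : ∀ π, IsPolicy π → Lag H p s₁ r u c π lams ≤ pstar := by
    intro π hπ
    have h1 := hAineq π hπ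
    have h2 : α * Lag H p s₁ r u c π lams
        = α * Vval H p s₁ r π + ∑ i, β i * (Vval H p s₁ (u i) π - c i) := by
      unfold Lag
      rw [mul_add, Finset.mul_sum]
      congr 1
      apply Finset.sum_congr rfl
      intro i _
      have : α * (β i / α) = β i := by rw [mul_comm, div_mul_cancel₀ _ (ne_of_lt hαlt)]
      rw [show lams i = β i / α from rfl, ← mul_assoc, this]
    have h3 : α * pstar ≤ α * Lag H p s₁ r u c π lams := by rw [h2]; linarith
    exact (mul_le_mul_left_of_neg hαlt).1 h3
  -- weak duality facts at πs
  have hLag_ge : ∀ lam : Fin I → ℝ, (∀ i, 0 ≤ lam i) → pstar ≤ Lag H p s₁ r u c πs lam := by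
    intro lam hlam
    unfold Lag
    rw [hpstar]
    have : 0 ≤ ∑ i, lam i * (Vval H p s₁ (u i) πs - c i) :=
      Finset.sum_nonneg fun i _ => mul_nonneg (hlam i) (by linarith [hπsKf.2 i])
    linarith
  have hLag0 : Lag H p s₁ r u c πs 0 = pstar := by
    unfold Lag
    rw [hpstar]; simp
  -- EReal computations
  have hinf_s : (⨅ lam : {l : Fin I → ℝ // ∀ i, 0 ≤ l i},
      ((Lag H p s₁ r u c πs lam.1 : ℝ) : EReal)) = ((pstar : ℝ) : EReal) := by
    apply le_antisymm
    · exact iInf_le_of_le ⟨0, fun i => le_refl 0⟩ (le_of_eq (by rw [hLag0]))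
    · exact le_iInf fun lam => by exact_mod_cast hLag_ge lam.1 lam.2
  have hsup_inner : (⨆ π : {π : ℕ → S → A → ℝ // IsPolicy π},
      ⨅ lam : {l : Fin I → ℝ // ∀ i, 0 ≤ l i},
        ((Lag H p s₁ r u c π.1 lam.1 : ℝ) : EReal)) = ((pstar : ℝ) : EReal) := by
    apply le_antisymm
    · apply iSup_le
      intro π
      refine le_trans (iInf_le _ ⟨lams, hlams⟩) ?_
      exact_mod_cast hkey π.1 π.2
    · exact le_iSup_of_le ⟨πs, hπsKf.1⟩ (le_of_eq hinf_s.symm)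
  have hsup_lams : (⨆ π : {π : ℕ → S → A → ℝ // IsPolicy π},
      ((Lag H p s₁ r u c π.1 lams : ℝ) : EReal)) = ((pstar : ℝ) : EReal) :=
    le_antisymm (iSup_le fun π => by exact_mod_cast hkey π.1 π.2)
      (le_iSup_of_le ⟨πs, hπsKf.1⟩ (by exact_mod_cast hLag_ge lams hlams))
  have hinf_outer : (⨅ lam : {l : Fin I → ℝ // ∀ i, 0 ≤ l i},
      ⨆ π : {π : ℕ → S → A → ℝ // IsPolicy π},
        ((Lag H p s₁ r u c π.1 lam.1 : ℝ) : EReal)) = ((pstar : ℝ) : EReal) :=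
    le_antisymm (iInf_le_of_le ⟨lams, hlams⟩ (le_of_eq hsup_lams))
      (le_iInf fun lam => le_iSup_of_le ⟨πs, hπsKf.1⟩
        (by exact_mod_cast hLag_ge lam.1 lam.2))
  exact ⟨πs, lams, hπsKf.1, hlams,
    by rw [hinf_s, hsup_inner],
    by rw [hsup_lams, hinf_outer],
    by rw [hsup_inner, hinf_outer]⟩


end
end

section
/- Regularized value function bounds (Lemma G.5): let λ ∈ Λ = [0,λ̄]^I, τ > 0, and let π be a policy with π_h(a|s) > 0 for all h,s,a; set ψ_h(s,a) := −log π_h(a|s). Then: (1) for all h,s,a, 0 ≤ Q^π_{r + λᵀu + τψ, h}(s,a) ≤ −τ log π_h(a|s) + H(1 + Iλ̄ + τ log A); (2) if additionally η > 0 with ητ ≤ 1/4, then for all h,s, ∑_a π_h(a|s)·exp(η Q^π_{r + λᵀu + τψ, h}(s,a))·(Q^π_{r + λᵀu + τψ, h}(s,a))² ≤ √A·exp(ηH(1 + λ̄I + τ log A))·(2H²(1 + Iλ̄ + τ log A)² + 128 τ²/e²); (3) with g_{i,h}(s,a) := u_{i,h}(s,a) − c_i/H, the vector (V^π_{g_1},…,V^π_{g_I})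 + τλ has Euclidean norm at most √I·(H + τλ̄). -/
open Finset

noncomputable section

/-- Entropy `𝓗(π) = −E_π[∑_{h=1}^H log π_h(a_h|s_h)]`, expressed as the value of the
reward function `(h,s,a) ↦ −log π_h(a|s)`. -/
def entropy {S A : Type*} [Fintype S] [Fintype A] (H : ℕ) (p : ℕ → S → A → S → ℝ)
    (s₁ : S) (π : ℕ → S → A → ℝ) : ℝ :=
  Vval H p s₁ (fun h s a => - Real.log (π h s a)) π

/-- The regularized Lagrangian `L_τ(π,λ) = L(π,λ) + τ(𝓗(π) + ½‖λ‖²)`. -/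
def Lreg {S A : Type*} [Fintype S] [Fintype A] {I : ℕ} (H : ℕ) (p : ℕ → S → A → S → ℝ)
    (s₁ : S) (r : ℕ → S → A → ℝ) (u : Fin I → ℕ → S → A → ℝ) (c : Fin I → ℝ)
    (τ : ℝ) (π : ℕ → S → A → ℝ) (lam : Fin I → ℝ) : ℝ :=
  Lag H p s₁ r u c π lam + τ * (entropy H p s₁ π + (1 / 2) * ∑ i, lam i ^ 2)

/-- `P_π[s_h = s]` (0-indexed step `h`). -/
def stateDist {S A : Type*} [Fintype S] [Fintype A] [DecidableEq S]
    (p : ℕ → S → A → S → ℝ) (s₁ : S) (π : ℕ → S → A → ℝ) : ℕ → S → ℝ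
  | 0 => fun s => if s = s₁ then 1 else 0
  | h + 1 => fun s' => ∑ s, ∑ a, stateDist p s₁ π h s * π h s a * p h s a s'

/-- Kullback-Leibler divergence between two distributions on a finite set. -/
def klDiv {A : Type*} [Fintype A] (q q' : A → ℝ) : ℝ :=
  ∑ a, q a * Real.log (q a / q' a)

/-- The potential `Φ` measuring the distance of `(π,λ)` to `(π*_τ, λ*_τ)`:
`Φ = ∑_{h,s} P_{π*_τ}[s_h = s]·KL(π*_{τ,h}(·|s), π_h(·|s)) + ½‖λ*_τ − λ‖²`. -/
def Pot {S A : Type*} [Fintype S] [Fintype A] [DecidableEq S] {I : ℕ} (H : ℕ)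
    (p : ℕ → S → A → S → ℝ) (s₁ : S) (πτ : ℕ → S → A → ℝ) (lamτ : Fin I → ℝ)
    (π : ℕ → S → A → ℝ) (lam : Fin I → ℝ) : ℝ :=
  (∑ h ∈ Finset.range H, ∑ s, stateDist p s₁ πτ h s * klDiv (πτ h s) (π h s))
    + (1 / 2) * ∑ i, (lamτ i - lam i) ^ 2

/-- The regularized primal-dual scheme: `pdIter … k = (π_{k+1}, λ_{k+1})` (so
`pdIter … 0` is the uniform policy together with the zero multiplier, and the dual
update is the Euclidean projection onto the box `Λ = [0, λ̄]^I`). -/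
def pdIter {S A : Type*} [Fintype S] [Fintype A] {I : ℕ} (H : ℕ)
    (p : ℕ → S → A → S → ℝ) (s₁ : S) (r : ℕ → S → A → ℝ) (u : Fin I → ℕ → S → A → ℝ)
    (c : Fin I → ℝ) (η τ lamBar : ℝ) : ℕ → (ℕ → S → A → ℝ) × (Fin I → ℝ)
  | 0 => (fun _ _ _ => (Fintype.card A : ℝ)⁻¹, fun _ => 0)
  | k + 1 =>
      let π := (pdIter H p s₁ r u c η τ lamBar k).1
      let lam := (pdIter H p s₁ r u c η τ lamBar k).2
      let z : ℕ → S → A → ℝ := fun h s a =>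
        r h s a + (∑ i, lam i * u i h s a) + τ * (- Real.log (π h s a))
      (fun h s a =>
          π h s a * Real.exp (η * Qval H p z π h s a) /
            ∑ a', π h s a' * Real.exp (η * Qval H p z π h s a'),
        fun i => max 0 (min lamBar
          ((1 - η * τ) * lam i - η * (Vval H p s₁ (u i) π - c i))))


section Helpers

variable {S A : Type*} [Fintype S] [Fintype A]

lemma wavg_le {α : Type*} [Fintype α] {w f : α → ℝ} {B : ℝ}
    (hw : ∀ a, 0 ≤ w a) (hsum : ∑ a, w a = 1) (hf : ∀ a, f a ≤ B) :
    ∑ a, w a * f a ≤ B := by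
  calc ∑ a, w a * f a ≤ ∑ a, w a * B :=
        Finset.sum_le_sum fun a _ => mul_le_mul_of_nonneg_left (hf a) (hw a)
    _ = B := by rw [← Finset.sum_mul, hsum, one_mul]

lemma wavg_ge {α : Type*} [Fintype α] {w f : α → ℝ} {B : ℝ}
    (hw : ∀ a, 0 ≤ w a) (hsum : ∑ a, w a = 1) (hf : ∀ a, B ≤ f a) :
    B ≤ ∑ a, w a * f a := by
  calc B = ∑ a, w a * B := by rw [← Finset.sum_mul, hsum, one_mul]
    _ ≤ ∑ a, w a * f a :=
        Finset.sum_le_sum fun a _ => mul_le_mul_of_nonneg_left (hf a) (hw a)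

lemma texp_le {t : ℝ} (_ht : 0 ≤ t) : t * Real.exp (-t) ≤ Real.exp (-1 : ℝ) := by
  have h1 : t ≤ Real.exp (t - 1) := by
    have := Real.add_one_le_exp (t - 1); linarith
  calc t * Real.exp (-t) ≤ Real.exp (t - 1) * Real.exp (-t) :=
        mul_le_mul_of_nonneg_right h1 (Real.exp_pos _).le
    _ = Real.exp (-1 : ℝ) := by rw [← Real.exp_add]; ring_nf

lemma entropy_le_log_card {A : Type*} [Fintype A] [Nonempty A] (q : A → ℝ)
    (hq : ∀ a, 0 < q a) (hsum : ∑ a, q a = 1) :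
    ∑ a, q a * (-Real.log (q a)) ≤ Real.log (Fintype.card A) := by
  have hA : (0:ℝ) < (Fintype.card A : ℝ) := by
    exact_mod_cast Fintype.card_pos
  have key : ∀ a, q a * (-Real.log (q a)) ≤
      (Fintype.card A : ℝ)⁻¹ - q a + q a * Real.log (Fintype.card A) := by
    intro a
    have hx : (0:ℝ) < ((Fintype.card A : ℝ) * q a)⁻¹ := inv_pos.mpr (mul_pos hA (hq a))
    have h1 := Real.log_le_sub_one_of_pos hx
    rw [Real.log_inv, Real.log_mul (ne_of_gt hA) (ne_of_gt (hq a))] at h1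
    have h2 := mul_le_mul_of_nonneg_left h1 (hq a).le
    have hq' : q a * ((Fintype.card A : ℝ) * q a)⁻¹ = (Fintype.card A : ℝ)⁻¹ := by
      rw [mul_comm (Fintype.card A : ℝ) (q a), mul_inv, ← mul_assoc,
        mul_inv_cancel₀ (ne_of_gt (hq a)), one_mul]
    nlinarith [hq a]
  calc ∑ a, q a * (-Real.log (q a))
      ≤ ∑ a, ((Fintype.card A : ℝ)⁻¹ - q a + q a * Real.log (Fintype.card A)) :=
        Finset.sum_le_sum fun a _ => key a
    _ = Real.log (Fintype.card A) := by
        rw [Finset.sum_add_distrib, Finset.sum_sub_distrib, ← Finset.sum_mul, hsum,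
          Finset.sum_const, Finset.card_univ]
        rw [nsmul_eq_mul, mul_inv_cancel₀ (ne_of_gt hA)]; ring

lemma Qaux_nonneg {p : ℕ → S → A → S → ℝ}
    {π : ℕ → S → A → ℝ} {z : ℕ → S → A → ℝ} (hp : IsKernel p) (hπ : IsPolicy π)
    (hz : ∀ h s a, 0 ≤ z h s a) : ∀ n h s a, 0 ≤ Qaux p z π n h s a := by
  intro n
  induction n with
  | zero => intro h s a; simp [Qaux]
  | succ n ih =>
    intro h s a
    have h2 : 0 ≤ ∑ s', p h s a s' * ∑ a', π (h+1) s' a' * Qaux p z π n (h+1) s' a' :=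
      Finset.sum_nonneg fun s' _ => mul_nonneg ((hp h s a).1 s')
        (Finset.sum_nonneg fun a' _ => mul_nonneg ((hπ (h+1) s').1 a') (ih _ _ _))
    have := hz h s a
    show 0 ≤ z h s a + _
    linarith

lemma Qaux_le {p : ℕ → S → A → S → ℝ}
    {π : ℕ → S → A → ℝ} {z f : ℕ → S → A → ℝ} {K₀ F : ℝ}
    (hp : IsKernel p) (hπ : IsPolicy π)
    (hf : ∀ h s a, 0 ≤ f h s a)
    (hz : ∀ h s a, z h s a ≤ K₀ + f h s a)
    (havg : ∀ h s, ∑ a, π h s a * f h s a ≤ F) :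
    ∀ n h s a, Qaux p z π n h s a ≤ f h s a + n * (K₀ + F) := by
  intro n
  induction n with
  | zero => intro h s a; simpa [Qaux] using hf h s a
  | succ n ih =>
    intro h s a
    have hin : ∀ s', ∑ a', π (h+1) s' a' * Qaux p z π n (h+1) s' a' ≤ F + n * (K₀ + F) := by
      intro s'
      calc ∑ a', π (h+1) s' a' * Qaux p z π n (h+1) s' a'
          ≤ ∑ a', π (h+1) s' a' * (f (h+1) s' a' + n * (K₀ + F)) :=
            Finset.sum_le_sum fun a' _ =>
              mul_le_mul_of_nonneg_left (ih (h+1) s' a') ((hπ (h+1) s').1 a')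
        _ = (∑ a', π (h+1) s' a' * f (h+1) s' a') + n * (K₀ + F) := by
            rw [Finset.sum_congr rfl (fun a' _ => mul_add _ _ _), Finset.sum_add_distrib,
              ← Finset.sum_mul, (hπ (h+1) s').2, one_mul]
        _ ≤ F + n * (K₀ + F) := by linarith [havg (h+1) s']
    have houter : ∑ s', p h s a s' * ∑ a', π (h+1) s' a' * Qaux p z π n (h+1) s' a'
        ≤ F + n * (K₀ + F) := wavg_le (hp h s a).1 (hp h s a).2 hin
    have := hz h s a
    show z h s a + _ ≤ _
    push_cast
    linarith

lemma Qaux_mem {p : ℕ → S → A → S → ℝ}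
    {π : ℕ → S → A → ℝ} {z : ℕ → S → A → ℝ} {lo hi : ℝ}
    (hp : IsKernel p) (hπ : IsPolicy π)
    (hz : ∀ h s a, z h s a ∈ Set.Icc lo hi) :
    ∀ (n : ℕ) (h : ℕ) s a, Qaux p z π n h s a ∈ Set.Icc ((n : ℝ) * lo) ((n : ℝ) * hi) := by
  intro n
  induction n with
  | zero => intro h s a; simp [Qaux]
  | succ n ih =>
    intro h s a
    have hin_le : ∀ s', ∑ a', π (h+1) s' a' * Qaux p z π n (h+1) s' a' ≤ n * hi := fun s' =>
      wavg_le (hπ (h+1) s').1 (hπ (h+1) s').2 (fun a' => (ih (h+1) s' a').2)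
    have hin_ge : ∀ s', (n : ℝ) * lo ≤ ∑ a', π (h+1) s' a' * Qaux p z π n (h+1) s' a' := fun s' =>
      wavg_ge (hπ (h+1) s').1 (hπ (h+1) s').2 (fun a' => (ih (h+1) s' a').1)
    have ho_le := wavg_le (hp h s a).1 (hp h s a).2 hin_le
    have ho_ge := wavg_ge (hp h s a).1 (hp h s a).2 hin_ge
    have h1 := (hz h s a).1
    have h2 := (hz h s a).2
    constructor
    · show _ ≤ z h s a + _; push_cast; linarith
    · show z h s a + _ ≤ _; push_cast; linarith

end Helpers

set_option maxHeartbeats 2000000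

/-- Regularized value function bounds, Lemma G.5.
For `λ ∈ [0,λ̄]^I`, `τ > 0`, and a policy `π` with everywhere positive action
probabilities, with `ψ_h(s,a) = −log π_h(a|s)` and
`z = r + λᵀu + τψ`: (1) `0 ≤ Q^π_{z,h}(s,a) ≤ −τ log π_h(a|s) + H(1 + Iλ̄ + τ log A)`;
(2) if `0 < η` and `ητ ≤ 1/4`, the local-norm bound on the exponentiated `Q`-values
holds; (3) `‖(V^π_{g_1},…,V^π_{g_I}) + τλ‖ ≤ √I (H + τλ̄)` where
`g_{i,h}(s,a) = u_{i,h}(s,a) − c_i/H`. -/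
theorem reg_value_function_bounds
    {S A : Type*} [Fintype S] [Fintype A] [Nonempty S] [Nonempty A]
    {I : ℕ} (H : ℕ) (hH : 0 < H)
    (p : ℕ → S → A → S → ℝ) (hp : IsKernel p) (s₁ : S)
    (r : ℕ → S → A → ℝ) (hr : ∀ h s a, r h s a ∈ Set.Icc (0 : ℝ) 1)
    (u : Fin I → ℕ → S → A → ℝ) (hu : ∀ i h s a, u i h s a ∈ Set.Icc (0 : ℝ) 1)
    (c : Fin I → ℝ) (hc : ∀ i, c i ∈ Set.Icc (0 : ℝ) (H : ℝ))
    (τ : ℝ) (hτ : 0 < τ) (lamBar : ℝ) (hlamBar : 0 < lamBar)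
    (lam : Fin I → ℝ) (hlam : ∀ i, lam i ∈ Set.Icc (0 : ℝ) lamBar)
    (π : ℕ → S → A → ℝ) (hπ : IsPolicy π) (hπpos : ∀ h s a, 0 < π h s a) :
    -- (1) pointwise bounds on the regularized Q-values
    (∀ h s a,
      0 ≤ Qval H p
            (fun h' s' a' => r h' s' a' + (∑ i, lam i * u i h' s' a')
              + τ * (- Real.log (π h' s' a'))) π h s a ∧
      Qval H p
          (fun h' s' a' => r h' s' a' + (∑ i, lam i * u i h' s' a')
            + τ * (- Real.log (π h' s' a'))) π h s a
        ≤ - τ * Real.log (π h s a)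
          + (H : ℝ) * (1 + I * lamBar + τ * Real.log (Fintype.card A))) ∧
    -- (2) local-norm bound
    (∀ η : ℝ, 0 < η → η * τ ≤ 1 / 4 → ∀ h s,
      ∑ a, π h s a *
          Real.exp (η * Qval H p
            (fun h' s' a' => r h' s' a' + (∑ i, lam i * u i h' s' a')
              + τ * (- Real.log (π h' s' a'))) π h s a) *
          (Qval H p
            (fun h' s' a' => r h' s' a' + (∑ i, lam i * u i h' s' a')
              + τ * (- Real.log (π h' s' a'))) π h s a) ^ 2
        ≤ Real.sqrt (Fintype.card A) *
            Real.exp (η * H * (1 + lamBar * I + τ * Real.log (Fintype.card A))) *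
            (2 * (H : ℝ) ^ 2 * (1 + I * lamBar + τ * Real.log (Fintype.card A)) ^ 2
              + 128 * τ ^ 2 / Real.exp 1 ^ 2)) ∧
    -- (3) norm bound on the shifted constraint values
    Real.sqrt (∑ i,
        (Vval H p s₁ (fun h s a => u i h s a - c i / (H : ℝ)) π + τ * lam i) ^ 2)
      ≤ Real.sqrt I * ((H : ℝ) + τ * lamBar) := by
  classical
  set z : ℕ → S → A → ℝ := fun h' s' a' => r h' s' a' + (∑ i, lam i * u i h' s' a')
      + τ * (- Real.log (π h' s' a')) with hzdef
  have hA1 : (1:ℝ) ≤ (Fintype.card A : ℝ) := by exact_mod_cast Fintype.card_pos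
  have hlogA : 0 ≤ Real.log (Fintype.card A) := Real.log_nonneg hA1
  set K : ℝ := 1 + (I:ℝ) * lamBar + τ * Real.log (Fintype.card A) with hKdef
  have hK : 0 ≤ K := by
    have : 0 ≤ (I:ℝ) * lamBar := mul_nonneg (Nat.cast_nonneg _) hlamBar.le
    have h2 : 0 ≤ τ * Real.log (Fintype.card A) := mul_nonneg hτ.le hlogA
    rw [hKdef]; linarith
  have hπle1 : ∀ h s a, π h s a ≤ 1 := by
    intro h s a
    calc π h s a ≤ ∑ a', π h s a' :=
          Finset.single_le_sum (fun a' _ => (hπ h s).1 a') (Finset.mem_univ a)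
      _ = 1 := (hπ h s).2
  have hL0 : ∀ h s a, 0 ≤ -Real.log (π h s a) := fun h s a =>
    neg_nonneg.2 (Real.log_nonpos (hπpos h s a).le (hπle1 h s a))
  have hz0 : ∀ h s a, 0 ≤ z h s a := by
    intro h s a
    have h1 := (hr h s a).1
    have h2 : 0 ≤ ∑ i, lam i * u i h s a :=
      Finset.sum_nonneg fun i _ => mul_nonneg (hlam i).1 (hu i h s a).1
    have h3 : 0 ≤ τ * (-Real.log (π h s a)) := mul_nonneg hτ.le (hL0 h s a)
    rw [hzdef]; dsimp only; linarith
  have hzub : ∀ h s a, z h s a ≤ (1 + (I:ℝ) * lamBar) + τ * (-Real.log (π h s a)) := by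
    intro h s a
    have h1 := (hr h s a).2
    have h2 : ∑ i, lam i * u i h s a ≤ (I:ℝ) * lamBar := by
      calc ∑ i, lam i * u i h s a ≤ ∑ _i : Fin I, lamBar :=
            Finset.sum_le_sum fun i _ => by
              have := mul_le_mul (hlam i).2 (hu i h s a).2 (hu i h s a).1 hlamBar.le
              simpa using this
        _ = (I:ℝ) * lamBar := by simp [Finset.sum_const, mul_comm]
    rw [hzdef]; dsimp only; linarith
  have havg : ∀ h s, ∑ a, π h s a * (τ * (-Real.log (π h s a)))
      ≤ τ * Real.log (Fintype.card A) := by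
    intro h s
    have : ∑ a, π h s a * (τ * (-Real.log (π h s a)))
        = τ * ∑ a, π h s a * (-Real.log (π h s a)) := by
      rw [Finset.mul_sum]; exact Finset.sum_congr rfl fun a _ => by ring
    rw [this]
    exact mul_le_mul_of_nonneg_left
      (entropy_le_log_card (π h s) (hπpos h s) (hπ h s).2) hτ.le
  have hQub := Qaux_le (f := fun h s a => τ * (-Real.log (π h s a)))
    (K₀ := 1 + (I:ℝ) * lamBar) (F := τ * Real.log (Fintype.card A)) hp hπ
    (fun h s a => mul_nonneg hτ.le (hL0 h s a)) hzub havg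
  have hQ0 := Qaux_nonneg hp hπ hz0
  have part1 : ∀ h s a, 0 ≤ Qval H p z π h s a ∧
      Qval H p z π h s a ≤ - τ * Real.log (π h s a) + (H:ℝ) * K := by
    intro h s a
    constructor
    · exact hQ0 (H - h) h s a
    · have h1 := hQub (H - h) h s a
      have h2 : ((H - h : ℕ) : ℝ) ≤ (H : ℝ) := by exact_mod_cast Nat.sub_le H h
      have h3 : ((H - h : ℕ) : ℝ) * ((1 + (I:ℝ) * lamBar) + τ * Real.log (Fintype.card A))
          ≤ (H:ℝ) * K := by
        rw [hKdef]
        have : (1 + (I:ℝ) * lamBar) + τ * Real.log (Fintype.card A)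
            = 1 + (I:ℝ) * lamBar + τ * Real.log (Fintype.card A) := by ring
        rw [this]
        exact mul_le_mul_of_nonneg_right h2 (by rw [hKdef] at hK; exact hK)
      show Qval H p z π h s a ≤ - τ * Real.log (π h s a) + (H:ℝ) * K
      have : Qval H p z π h s a = Qaux p z π (H - h) h s a := rfl
      rw [this]
      have h4 : -τ * Real.log (π h s a) = τ * (-Real.log (π h s a)) := by ring
      linarith
  refine ⟨part1, ?_, ?_⟩
  · -- Part 2
    intro η hη hητ h s
    set B : ℝ := (H:ℝ) * K with hBdef
    have hB : 0 ≤ B := mul_nonneg (Nat.cast_nonneg _) hK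
    set C : ℝ := Real.exp (η * B) * (2 * B^2 + 128 * τ^2 / Real.exp 1 ^ 2) with hCdef
    have hC0 : 0 ≤ C := by positivity
    have key : ∀ a, π h s a * Real.exp (η * Qval H p z π h s a) * (Qval H p z π h s a)^2
        ≤ C * Real.exp (Real.log (π h s a) / 2) := by
      intro a
      set Qa := Qval H p z π h s a with hQadef
      set L : ℝ := -Real.log (π h s a) with hLdef
      have hL : 0 ≤ L := hL0 h s a
      have hπe : π h s a = Real.exp (-L) := by
        rw [hLdef, neg_neg, Real.exp_log (hπpos h s a)]
      have hQa0 : 0 ≤ Qa := (part1 h s a).1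
      have hQaub : Qa ≤ τ * L + B := by
        have := (part1 h s a).2
        rw [hLdef]; rw [hBdef]; nlinarith
      have hsq : Qa^2 ≤ 2 * τ^2 * L^2 + 2 * B^2 := by
        nlinarith [sq_nonneg (τ * L - B), sq_nonneg (τ * L + B - Qa),
          mul_nonneg (mul_nonneg hτ.le hL) hB]
      have hexp : Real.exp (η * Qa) ≤ Real.exp (η * τ * L) * Real.exp (η * B) := by
        rw [← Real.exp_add]
        apply Real.exp_le_exp.2
        nlinarith [mul_le_mul_of_nonneg_left hQaub hη.le]
      have step4 : π h s a * Real.exp (η * Qa) * Qa^2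
          ≤ Real.exp (-L) * (Real.exp (η * τ * L) * Real.exp (η * B))
              * (2 * τ^2 * L^2 + 2 * B^2) := by
        rw [hπe]
        exact mul_le_mul (mul_le_mul_of_nonneg_left hexp (Real.exp_pos _).le)
          hsq (sq_nonneg _) (by positivity)
      set d : ℝ := 1/2 - η * τ with hddef
      have hd : (1/4:ℝ) ≤ d := by rw [hddef]; linarith
      have hd0 : (0:ℝ) < d := lt_of_lt_of_le (by norm_num) hd
      have htexp := texp_le (t := d * L / 2) (by positivity)
      have h8 : Real.exp (-(d * L / 2)) * L ≤ 8 * Real.exp (-1:ℝ) := by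
        have h2d : 2 / d ≤ 8 := by rw [div_le_iff₀ hd0, hddef]; linarith
        have heq : Real.exp (-(d * L / 2)) * L
            = (2 / d) * ((d * L / 2) * Real.exp (-(d * L / 2))) := by
          field_simp
        rw [heq]
        have := mul_le_mul h2d htexp
          (mul_nonneg (by positivity) (Real.exp_pos _).le) (by norm_num)
        linarith
      have hkey1 : Real.exp (-(d * L)) * L^2 ≤ 64 / Real.exp 1 ^ 2 := by
        have hsq2 : (Real.exp (-(d * L / 2)) * L)^2 ≤ (8 * Real.exp (-1:ℝ))^2 :=
          pow_le_pow_left₀ (mul_nonneg (Real.exp_pos _).le hL) h8 2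
        have hre : (Real.exp (-(d * L / 2)) * L)^2 = Real.exp (-(d * L)) * L^2 := by
          rw [mul_pow, sq (Real.exp _), ← Real.exp_add]
          congr 2
          ring
        have hre2 : (8 * Real.exp (-1:ℝ))^2 = 64 / Real.exp 1 ^ 2 := by
          rw [Real.exp_neg]
          field_simp
          ring
        rw [hre, hre2] at hsq2
        exact hsq2
      have hkey2 : Real.exp (-(d * L)) ≤ 1 :=
        Real.exp_le_one_iff.2 (by nlinarith)
      have step5 : Real.exp (-L) * (Real.exp (η * τ * L) * Real.exp (η * B))
            * (2 * τ^2 * L^2 + 2 * B^2)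
          ≤ C * Real.exp (Real.log (π h s a) / 2) := by
        have hsplit : Real.exp (-L) * (Real.exp (η * τ * L) * Real.exp (η * B))
            = Real.exp (η * B) * (Real.exp (-(L/2)) * Real.exp (-(d * L))) := by
          rw [← Real.exp_add, ← Real.exp_add, ← Real.exp_add, ← Real.exp_add]
          congr 1
          rw [hddef]; ring
        rw [hsplit]
        have hinner : Real.exp (-(d * L)) * (2 * τ^2 * L^2 + 2 * B^2)
            ≤ 2 * B^2 + 128 * τ^2 / Real.exp 1 ^ 2 := by
          have e1 : Real.exp (-(d * L)) * (2 * τ^2 * L^2 + 2 * B^2)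
              = 2 * τ^2 * (Real.exp (-(d * L)) * L^2)
                + 2 * B^2 * Real.exp (-(d * L)) := by ring
          rw [e1]
          have t1 : 2 * τ^2 * (Real.exp (-(d * L)) * L^2) ≤ 2 * τ^2 * (64 / Real.exp 1 ^ 2) :=
            mul_le_mul_of_nonneg_left hkey1 (by positivity)
          have t2 : 2 * B^2 * Real.exp (-(d * L)) ≤ 2 * B^2 * 1 :=
            mul_le_mul_of_nonneg_left hkey2 (by positivity)
          have : 2 * τ^2 * (64 / Real.exp 1 ^ 2) = 128 * τ^2 / Real.exp 1 ^ 2 := by ring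
          linarith
        have hhalf : Real.exp (-(L/2)) = Real.exp (Real.log (π h s a) / 2) := by
          congr 1
          rw [hLdef]; ring
        calc Real.exp (η * B) * (Real.exp (-(L/2)) * Real.exp (-(d * L)))
              * (2 * τ^2 * L^2 + 2 * B^2)
            = Real.exp (η * B) * Real.exp (-(L/2))
                * (Real.exp (-(d * L)) * (2 * τ^2 * L^2 + 2 * B^2)) := by ring
          _ ≤ Real.exp (η * B) * Real.exp (-(L/2))
                * (2 * B^2 + 128 * τ^2 / Real.exp 1 ^ 2) :=
              mul_le_mul_of_nonneg_left hinner (by positivity)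
          _ = C * Real.exp (Real.log (π h s a) / 2) := by
              rw [hCdef, hhalf]; ring
      exact le_trans step4 step5
    have hsumsqrt : ∑ a, Real.exp (Real.log (π h s a) / 2) ≤ Real.sqrt (Fintype.card A) := by
      have hsq : (∑ a, Real.exp (Real.log (π h s a) / 2))^2 ≤ (Fintype.card A : ℝ) := by
        have h1 := sq_sum_le_card_mul_sum_sq (s := Finset.univ)
          (f := fun a => Real.exp (Real.log (π h s a) / 2))
        have h2 : ∑ a, (Real.exp (Real.log (π h s a) / 2))^2 = 1 := by
          rw [← (hπ h s).2]
          refine Finset.sum_congr rfl fun a _ => ?_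
          rw [sq, ← Real.exp_add]
          rw [show Real.log (π h s a) / 2 + Real.log (π h s a) / 2 = Real.log (π h s a) by ring]
          exact Real.exp_log (hπpos h s a)
        rw [h2] at h1
        simpa [Finset.card_univ] using h1
      have h0 : 0 ≤ ∑ a, Real.exp (Real.log (π h s a) / 2) :=
        Finset.sum_nonneg fun a _ => (Real.exp_pos _).le
      calc ∑ a, Real.exp (Real.log (π h s a) / 2)
          = Real.sqrt ((∑ a, Real.exp (Real.log (π h s a) / 2))^2) :=
            (Real.sqrt_sq h0).symm
        _ ≤ Real.sqrt (Fintype.card A) := Real.sqrt_le_sqrt hsq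
    calc ∑ a, π h s a * Real.exp (η * Qval H p z π h s a) * (Qval H p z π h s a)^2
        ≤ ∑ a, C * Real.exp (Real.log (π h s a) / 2) :=
          Finset.sum_le_sum fun a _ => key a
      _ = C * ∑ a, Real.exp (Real.log (π h s a) / 2) := by rw [Finset.mul_sum]
      _ ≤ C * Real.sqrt (Fintype.card A) := mul_le_mul_of_nonneg_left hsumsqrt hC0
      _ = Real.sqrt (Fintype.card A) *
            Real.exp (η * H * (1 + lamBar * I + τ * Real.log (Fintype.card A))) *
            (2 * (H : ℝ) ^ 2 * (1 + I * lamBar + τ * Real.log (Fintype.card A)) ^ 2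
              + 128 * τ ^ 2 / Real.exp 1 ^ 2) := by
          have he : η * B = η * H * (1 + lamBar * I + τ * Real.log (Fintype.card A)) := by
            rw [hBdef, hKdef]; ring
          have hb2 : 2 * B^2 + 128 * τ^2 / Real.exp 1 ^ 2
              = 2 * (H : ℝ) ^ 2 * (1 + I * lamBar + τ * Real.log (Fintype.card A)) ^ 2
                + 128 * τ ^ 2 / Real.exp 1 ^ 2 := by
            rw [hBdef, hKdef]; ring
          rw [hCdef, he, hb2]; ring
  · -- Part 3
    have hHpos : (0:ℝ) < (H:ℝ) := by exact_mod_cast hH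
    have hVb : ∀ i, Vval H p s₁ (fun h s a => u i h s a - c i / (H : ℝ)) π
        ∈ Set.Icc (-(H:ℝ)) (H:ℝ) := by
      intro i
      have hzb : ∀ h s a, u i h s a - c i / (H:ℝ) ∈ Set.Icc (-1 : ℝ) 1 := by
        intro h s a
        have h1 := (hu i h s a).1
        have h2 := (hu i h s a).2
        have h3 : c i / (H:ℝ) ≤ 1 := (div_le_one hHpos).2 (hc i).2
        have h4 : 0 ≤ c i / (H:ℝ) := div_nonneg (hc i).1 hHpos.le
        constructor <;> simp <;> linarith
      have hQm := Qaux_mem hp hπ hzb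
      have hle : ∀ a, Qval H p (fun h s a => u i h s a - c i / (H:ℝ)) π 0 s₁ a ≤ (H:ℝ) * 1 := by
        intro a
        have := (hQm H 0 s₁ a).2
        simpa [Qval] using this
      have hge : ∀ a, (H:ℝ) * (-1) ≤ Qval H p (fun h s a => u i h s a - c i / (H:ℝ)) π 0 s₁ a := by
        intro a
        have := (hQm H 0 s₁ a).1
        simpa [Qval] using this
      constructor
      · have := wavg_ge (hπ 0 s₁).1 (hπ 0 s₁).2 hge
        unfold Vval
        linarith
      · have := wavg_le (hπ 0 s₁).1 (hπ 0 s₁).2 hle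
        unfold Vval
        linarith
    have hX0 : (0:ℝ) ≤ (H:ℝ) + τ * lamBar := by positivity
    have hterm : ∀ i, (Vval H p s₁ (fun h s a => u i h s a - c i / (H : ℝ)) π + τ * lam i)^2
        ≤ ((H:ℝ) + τ * lamBar)^2 := by
      intro i
      have h1 := (hVb i).1
      have h2 := (hVb i).2
      have h3 := (hlam i).1
      have h4 := (hlam i).2
      nlinarith [mul_le_mul_of_nonneg_left h4 hτ.le, mul_nonneg hτ.le h3]
    calc Real.sqrt (∑ i,
          (Vval H p s₁ (fun h s a => u i h s a - c i / (H : ℝ)) π + τ * lam i) ^ 2)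
        ≤ Real.sqrt ((I:ℝ) * ((H:ℝ) + τ * lamBar)^2) := by
          apply Real.sqrt_le_sqrt
          calc (∑ i, (Vval H p s₁ (fun h s a => u i h s a - c i / (H : ℝ)) π + τ * lam i) ^ 2)
              ≤ ∑ _i : Fin I, ((H:ℝ) + τ * lamBar)^2 :=
                Finset.sum_le_sum fun i _ => hterm i
            _ = (I:ℝ) * ((H:ℝ) + τ * lamBar)^2 := by
                simp [Finset.sum_const, mul_comm]
      _ = Real.sqrt I * ((H : ℝ) + τ * lamBar) := by
          rw [Real.sqrt_mul (Nat.cast_nonneg I), Real.sqrt_sq hX0]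


end
end
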